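/- Let R be an artinian local ring with finite residue field and let M be a profinite R-module (a topological R-module homeomorphic to a cofiltered limit of finite R-modules) with a continuous R-linear endomorphism T. Then T is locally finite (M has a basis of open neighborhoods of 0 consisting of T-stable open submodules) if and only if for every open submodule V ⊆ M, the submodule ⋂_{n≥0} T^{−n}(V) is open in M. -/

import Mathlib

open Filter Topology

/-- Let `M` be a profinite module over an artinian local ring `R` with finite
residue field (a separated complete topological `R`-module with a basis of
neighborhoods of `0` consisting of open submodules of finite index, i.e. a
cofiltered limit of finite modules — equivalently a compact, totally
disconnected Hausdorff topological module with such a basis), and `T` a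
continuous `R`-linear endomorphism.  Then `T` is locally finite (there is a
basis of open neighborhoods of `0` consisting of `T`-stable open submodules)
iff for every open submodule `V ⊆ M` the submodule `⋂_{n ≥ 0} T^{-n}(V)` is
open in `M`. -/
theorem statement7 (R : Type*) [CommRing R] [IsArtinianRing R] [IsLocalRing R]
    [Finite (IsLocalRing.ResidueField R)]
    (M : Type*) [AddCommGroup M] [Module R M] [TopologicalSpace M]
    [IsTopologicalAddGroup M] [CompactSpace M] [T2Space M]
    [TotallyDisconnectedSpace M]
    (hbasis : ∀ U ∈ 𝓝 (0 : M), ∃ V : Submodule R M,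
      IsOpen (V : Set M) ∧ Finite (M ⧸ V) ∧ (V : Set M) ⊆ U)
    (T : Module.End R M) (hT : Continuous T) :
    (∀ U ∈ 𝓝 (0 : M), ∃ V : Submodule R M,
        IsOpen (V : Set M) ∧ V.map T ≤ V ∧ (V : Set M) ⊆ U) ↔
      (∀ V : Submodule R M, IsOpen (V : Set M) →
        IsOpen ((⨅ n : ℕ, V.comap (T ^ n)) : Set M)) := by
  constructor
  · intro h V hVopen
    obtain ⟨W, hWopen, hWstab, hWV⟩ := h V (hVopen.mem_nhds V.zero_mem)
    have hle : W ≤ ⨅ n, V.comap (T ^ n) := by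
      intro x hx
      simp only [Submodule.mem_iInf, Submodule.mem_comap]
      intro n
      have hmem : (T ^ n) x ∈ W := by
        induction n with
        | zero => simpa using hx
        | succ n ih =>
          have : T ((T ^ n) x) ∈ W := hWstab (Submodule.mem_map_of_mem ih)
          simpa [pow_succ', Module.End.mul_apply] using this
      exact hWV hmem
    rw [Set.iInf_eq_iInter, ← Submodule.coe_iInf]
    exact Submodule.isOpen_mono hle hWopen
  · intro h U hU
    obtain ⟨V, hVopen, _, hVU⟩ := hbasis U hU
    refine ⟨⨅ n, V.comap (T ^ n), by rw [Submodule.coe_iInf, ← Set.iInf_eq_iInter]; exact h V hVopen, ?_, ?_⟩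
    · rw [Submodule.map_le_iff_le_comap]
      intro x hx
      simp only [Submodule.mem_iInf, Submodule.mem_comap] at hx ⊢
      intro n
      have := hx (n + 1)
      simpa [pow_succ, Module.End.mul_apply] using this
    · refine Set.Subset.trans ?_ hVU
      intro x hx
      simp only [SetLike.mem_coe, Submodule.mem_iInf, Submodule.mem_comap] at hx
      simpa using hx 0
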